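/- Let X ∈ ℝ^{n×n} be Hurwitz and let Y₁, Y₂ ∈ ℝ^{n×n} be symmetric. If L_X(Y₂) − L_X(Y₁) is positive semidefinite (i.e. L_X(Y₁) ≤ L_X(Y₂) in the Loewner order), then Y₁ − Y₂ is positive semidefinite (i.e. Y₁ ≥ Y₂). -/

import Mathlib

open Matrix MeasureTheory Filter NormedSpace
open scoped Kronecker

noncomputable section

/-- A real square matrix is Hurwitz if every eigenvalue over `ℂ` has negative real part. -/
def IsHurwitz {n : Type*} [Fintype n] [DecidableEq n] (X : Matrix n n ℝ) : Prop :=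
  ∀ μ ∈ spectrum ℂ (X.map (algebraMap ℝ ℂ)), μ.re < 0

/-- The Frobenius norm of a real matrix. -/
def frobNorm {p q : Type*} [Fintype p] [Fintype q] (X : Matrix p q ℝ) : ℝ :=
  Real.sqrt (∑ i, ∑ j, (X i j) ^ 2)

/-- The spectral (ℓ²-operator) norm of a real matrix. -/
def spec2Norm {p q : Type*} [Fintype p] [Fintype q] [DecidableEq q] (X : Matrix p q ℝ) : ℝ :=
  ‖LinearMap.toContinuousLinearMap (Matrix.toEuclideanLin X)‖

section LyapAux

attribute [local instance] Matrix.linftyOpNormedAddCommGroup Matrix.linftyOpNormedRing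
  Matrix.linftyOpNormedAlgebra

variable {n : ℕ}

lemma lyap_scalar_decay {μ : ℂ} (hμ : μ.re < 0) (k : ℕ) :
    Tendsto (fun t : ℝ => Complex.exp ((t : ℂ) * μ) * (t : ℂ) ^ k) atTop (nhds 0) := by
  rw [tendsto_zero_iff_norm_tendsto_zero]
  have hb : 0 < -μ.re := by linarith
  have h0 : Tendsto (fun x : ℝ => x ^ k * Real.exp (-x)) atTop (nhds 0) :=
    Real.tendsto_pow_mul_exp_neg_atTop_nhds_zero k
  have hlin : Tendsto (fun t : ℝ => -μ.re * t) atTop atTop :=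
    Tendsto.const_mul_atTop hb tendsto_id
  have h1 : Tendsto (fun t : ℝ => (-μ.re * t) ^ k * Real.exp (-(-μ.re * t))) atTop (nhds 0) :=
    h0.comp hlin
  have h2 : Tendsto (fun t : ℝ => t ^ k * Real.exp (t * μ.re)) atTop (nhds 0) := by
    have h3 := h1.const_mul ((-μ.re) ^ k)⁻¹
    rw [mul_zero] at h3
    refine h3.congr' ?_
    filter_upwards [eventually_gt_atTop 0] with t ht
    rw [mul_pow]
    have : (-μ.re) ^ k ≠ 0 := pow_ne_zero _ (by linarith)
    field_simp
  refine (tendsto_congr' ?_).2 h2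
  filter_upwards [eventually_ge_atTop 0] with t ht
  rw [norm_mul, Complex.norm_exp, norm_pow, Complex.norm_real,
    Real.norm_of_nonneg ht]
  simp [mul_comm]

lemma lyap_gen_decay (B : Matrix (Fin n) (Fin n) ℂ) {μ : ℂ} (hμ : μ.re < 0) (K : ℕ)
    (v : Fin n → ℂ) (hv : ((B - μ • 1) ^ K) *ᵥ v = 0) :
    Tendsto (fun t : ℝ => exp ((t : ℂ) • B) *ᵥ v) atTop (nhds 0) := by
  set N : Matrix (Fin n) (Fin n) ℂ := B - μ • 1 with hN
  let φ : Matrix (Fin n) (Fin n) ℂ →ₗ[ℂ] (Fin n → ℂ) :=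
    { toFun := fun M => M *ᵥ v
      map_add' := fun M₁ M₂ => Matrix.add_mulVec _ _ _
      map_smul' := fun c M => by simpa using Matrix.smul_mulVec c M v }
  let Φ : Matrix (Fin n) (Fin n) ℂ →L[ℂ] (Fin n → ℂ) := φ.toContinuousLinearMap
  have key : ∀ t : ℝ, exp ((t : ℂ) • B) *ᵥ v =
      ∑ k ∈ Finset.range K,
        (Complex.exp ((t : ℂ) * μ) * (t : ℂ) ^ k * ((Nat.factorial k : ℂ))⁻¹) • ((N ^ k) *ᵥ v) := by
    intro t
    have hsplit : (t : ℂ) • B = ((t : ℂ) * μ) • (1 : Matrix (Fin n) (Fin n) ℂ) + (t : ℂ) • N := by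
      rw [hN, smul_sub, smul_smul]; abel
    have hcomm : Commute (((t : ℂ) * μ) • (1 : Matrix (Fin n) (Fin n) ℂ)) ((t : ℂ) • N) :=
      ((Commute.one_left _).smul_left _).smul_right _
    have hexp1 : exp (((t : ℂ) * μ) • (1 : Matrix (Fin n) (Fin n) ℂ))
        = Complex.exp ((t : ℂ) * μ) • (1 : Matrix (Fin n) (Fin n) ℂ) := by
      erw [← Algebra.algebraMap_eq_smul_one, ← map_exp (algebraMap ℂ (Matrix (Fin n) (Fin n) ℂ))
        (continuous_algebraMap _ _), ← Complex.exp_eq_exp_ℂ, Algebra.algebraMap_eq_smul_one]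
    have hexpN : exp ((t : ℂ) • N) *ᵥ v =
        ∑ k ∈ Finset.range K, ((t : ℂ) ^ k * ((Nat.factorial k : ℂ))⁻¹) • ((N ^ k) *ᵥ v) := by
      have h1 : exp ((t : ℂ) • N) *ᵥ v = Φ (∑' k : ℕ, ((Nat.factorial k : ℂ))⁻¹ • ((t : ℂ) • N) ^ k) := by
        rw [exp_eq_tsum (𝕂 := ℂ)]
        rfl
      rw [h1, Φ.map_tsum (expSeries_summable' ((t : ℂ) • N))]
      have h2 : ∀ k : ℕ, Φ (((Nat.factorial k : ℂ))⁻¹ • ((t : ℂ) • N) ^ k)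
          = ((t : ℂ) ^ k * ((Nat.factorial k : ℂ))⁻¹) • ((N ^ k) *ᵥ v) := by
        intro k
        rw [smul_pow, _root_.map_smul, _root_.map_smul]
        show ((Nat.factorial k : ℂ))⁻¹ • (t : ℂ) ^ k • (N ^ k *ᵥ v) = _
        rw [smul_smul, mul_comm]
      simp_rw [h2]
      refine tsum_eq_sum ?_
      intro k hk
      have hkK : K ≤ k := by
        by_contra hc
        exact hk (Finset.mem_range.2 (lt_of_not_ge hc))
      have : (N ^ k) *ᵥ v = 0 := by
        have : N ^ k = N ^ (k - K) * N ^ K := by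
          rw [← pow_add]; congr 1; omega
        rw [this, ← Matrix.mulVec_mulVec, hv, Matrix.mulVec_zero]
      rw [this, smul_zero]
    erw [hsplit, exp_add_of_commute hcomm, hexp1, Matrix.smul_mul, one_mul,
      Matrix.smul_mulVec, hexpN, Finset.smul_sum]
    refine Finset.sum_congr rfl fun k _ => ?_
    rw [smul_smul, mul_assoc]
  rw [show (0 : Fin n → ℂ) = ∑ k ∈ Finset.range K, (0 : Fin n → ℂ) by simp]
  refine (tendsto_finset_sum _ fun k _ => ?_).congr fun t => (key t).symm
  have h := ((lyap_scalar_decay hμ k).mul_const ((Nat.factorial k : ℂ))⁻¹).smul_const ((N ^ k) *ᵥ v)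
  simpa using h

lemma lyap_complex_decay (B : Matrix (Fin n) (Fin n) ℂ)
    (hB : ∀ μ ∈ spectrum ℂ B, μ.re < 0) (v : Fin n → ℂ) :
    Tendsto (fun t : ℝ => exp ((t : ℂ) • B) *ᵥ v) atTop (nhds 0) := by
  set f := Matrix.toLinAlgEquiv' B with hf
  have htop : (⨆ μ : ℂ, Module.End.maxGenEigenspace f μ) = ⊤ :=
    Module.End.iSup_maxGenEigenspace_eq_top f
  have hv : v ∈ (⨆ μ : ℂ, Module.End.maxGenEigenspace f μ) := htop ▸ Submodule.mem_top
  refine Submodule.iSup_induction (motive := fun w : Fin n → ℂ =>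
      Tendsto (fun t : ℝ => exp ((t : ℂ) • B) *ᵥ w) atTop (nhds 0)) _ hv ?_ ?_ ?_
  · intro μ x hx
    rcases Module.End.mem_maxGenEigenspace _ _ _ |>.1 hx with ⟨k, hk⟩
    by_cases hx0 : x = 0
    · subst hx0
      simpa [Matrix.mulVec_zero] using (tendsto_const_nhds :
        Tendsto (fun _ : ℝ => (0 : Fin n → ℂ)) atTop (nhds 0))
    · have hmat : ((B - μ • 1) ^ k) *ᵥ x = 0 := by
        have h1 : Matrix.toLinAlgEquiv' ((B - μ • 1) ^ k) = (f - μ • 1) ^ k := by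
          rw [map_pow, map_sub, _root_.map_smul, _root_.map_one]
        have h2 : ((B - μ • 1) ^ k) *ᵥ x = (Matrix.toLinAlgEquiv' ((B - μ • 1) ^ k)) x := rfl
        rw [h2, h1, hk]
      have hgen : Module.End.HasGenEigenvalue f μ k := by
        rw [Module.End.hasGenEigenvalue_iff]
        intro hbot
        have : x ∈ Module.End.genEigenspace f μ k := Module.End.mem_genEigenspace_nat.2 hk
        rw [hbot] at this
        exact hx0 (Submodule.mem_bot _ |>.1 this)
      have hspec : μ ∈ spectrum ℂ B := by
        have := (Module.End.hasEigenvalue_of_hasGenEigenvalue hgen).mem_spectrum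
        rwa [hf, AlgEquiv.spectrum_eq] at this
      exact lyap_gen_decay B (hB μ hspec) k x hmat
  · simpa [Matrix.mulVec_zero] using (tendsto_const_nhds :
      Tendsto (fun _ : ℝ => (0 : Fin n → ℂ)) atTop (nhds 0))
  · intro x y hx hy
    have := hx.add hy
    rw [add_zero] at this
    exact this.congr fun t => (Matrix.mulVec_add _ _ _).symm

lemma lyap_real_decay (X : Matrix (Fin n) (Fin n) ℝ)
    (hX : ∀ μ ∈ spectrum ℂ (X.map (algebraMap ℝ ℂ)), μ.re < 0) (v : Fin n → ℝ) :
    Tendsto (fun t : ℝ => exp (t • X) *ᵥ v) atTop (nhds 0) := by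
  set B : Matrix (Fin n) (Fin n) ℂ := X.map (algebraMap ℝ ℂ) with hB
  have hcont : Continuous (⇑((algebraMap ℝ ℂ).mapMatrix :
      Matrix (Fin n) (Fin n) ℝ →+* Matrix (Fin n) (Fin n) ℂ)) := by
    let ψ : Matrix (Fin n) (Fin n) ℝ →ₗ[ℝ] Matrix (Fin n) (Fin n) ℂ :=
      { toFun := fun M => M.map (algebraMap ℝ ℂ)
        map_add' := fun M₁ M₂ => by ext i j; simp [Matrix.map_apply]
        map_smul' := fun c M => by ext i j; simp [Matrix.map_apply] }
    exact ψ.continuous_of_finiteDimensional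
  have hmap : ∀ t : ℝ, (exp (t • X)).map (algebraMap ℝ ℂ) = exp ((t : ℂ) • B) := by
    intro t
    have h1 := map_exp ((algebraMap ℝ ℂ).mapMatrix :
      Matrix (Fin n) (Fin n) ℝ →+* Matrix (Fin n) (Fin n) ℂ) hcont (t • X)
    have h2 : ((algebraMap ℝ ℂ).mapMatrix (t • X) : Matrix (Fin n) (Fin n) ℂ)
        = (t : ℂ) • B := by
      ext i j
      simp [RingHom.mapMatrix_apply, Matrix.map_apply, hB]
    have h3 : (exp ((t : ℂ) • B) : Matrix (Fin n) (Fin n) ℂ) = exp ((t : ℂ) • B) := by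
      rfl
    erw [show (exp (t • X)).map (algebraMap ℝ ℂ)
        = (algebraMap ℝ ℂ).mapMatrix (exp (t • X)) from rfl, h1, h2, h3]
  rw [tendsto_pi_nhds]
  intro i
  have hc := lyap_complex_decay B hX (fun j => (v j : ℂ))
  have hci := (tendsto_pi_nhds.1 hc) i
  have hre := (Complex.continuous_re.tendsto 0).comp hci
  simp only [Pi.zero_apply, Complex.zero_re] at hre ⊢
  refine hre.congr fun t => ?_
  have hco : ((exp ((t : ℂ) • B)) *ᵥ (fun j => (v j : ℂ))) i
      = (((exp (t • X) *ᵥ v) i : ℝ) : ℂ) := by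
    rw [← hmap t]
    simp [Matrix.mulVec, dotProduct, Matrix.map_apply]
  simp only [Function.comp_apply]
  rw [hco, Complex.ofReal_re]

theorem lyap_key (X Y₁ Y₂ : Matrix (Fin n) (Fin n) ℝ)
    (hX : ∀ μ ∈ spectrum ℂ (X.map (algebraMap ℝ ℂ)), μ.re < 0)
    (hY₁ : Y₁.IsSymm) (hY₂ : Y₂.IsSymm)
    (h : ((Xᵀ * Y₂ + Y₂ * X) - (Xᵀ * Y₁ + Y₁ * X)).PosSemidef) :
    (Y₁ - Y₂).PosSemidef := by
  set Z : Matrix (Fin n) (Fin n) ℝ := Y₁ - Y₂ with hZ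
  set Q : Matrix (Fin n) (Fin n) ℝ := (Xᵀ * Y₂ + Y₂ * X) - (Xᵀ * Y₁ + Y₁ * X) with hQdef
  have hQ : ∀ x : Fin n → ℝ, 0 ≤ x ⬝ᵥ (Q *ᵥ x) := by
    intro x
    simpa using h.dotProduct_mulVec_nonneg x
  have hQZ : Xᵀ * Z + Z * X = -Q := by
    rw [hZ, hQdef]
    noncomm_ring
  refine Matrix.posSemidef_iff_dotProduct_mulVec.mpr ⟨?_, ?_⟩
  · rw [Matrix.IsHermitian, Matrix.conjTranspose_eq_transpose_of_trivial]
    exact hY₁.sub hY₂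
  intro v
  suffices hmain : 0 ≤ v ⬝ᵥ (Z *ᵥ v) by simpa using hmain
  set w : ℝ → (Fin n → ℝ) := fun t => exp (t • X) *ᵥ v with hw
  set g : ℝ → ℝ := fun t => w t ⬝ᵥ (Z *ᵥ w t) with hg
  -- coordinatewise derivative of w
  have hwd : ∀ (t : ℝ) (i : Fin n), HasDerivAt (fun s => w s i) ((X *ᵥ w t) i) t := by
    intro t i
    have hM : HasDerivAt (fun u : ℝ => exp (u • X)) (X * exp (t • X)) t :=
      hasDerivAt_exp_smul_const' X t
    let ℓ : Matrix (Fin n) (Fin n) ℝ →ₗ[ℝ] ℝ :=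
      { toFun := fun M => (M *ᵥ v) i
        map_add' := fun M₁ M₂ => by simp [Matrix.add_mulVec]
        map_smul' := fun c M => by simp [Matrix.smul_mulVec] }
    have hL := (ℓ.toContinuousLinearMap.hasFDerivAt.comp_hasDerivAt t hM)
    have h1 : ℓ.toContinuousLinearMap (X * exp (t • X)) = (X *ᵥ w t) i := by
      show ((X * exp (t • X)) *ᵥ v) i = (X *ᵥ w t) i
      rw [← Matrix.mulVec_mulVec]
    erw [h1] at hL
    exact hL
  -- derivative of g
  have hgd : ∀ t : ℝ, HasDerivAt g (-(w t ⬝ᵥ (Q *ᵥ w t))) t := by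
    intro t
    have hgdef : g = fun s => ∑ i, w s i * ∑ j, Z i j * w s j := by
      funext s
      simp [hg, dotProduct, Matrix.mulVec]
    have hsum : HasDerivAt (fun s => ∑ i, w s i * ∑ j, Z i j * w s j)
        (∑ i, ((X *ᵥ w t) i * (Z *ᵥ w t) i + w t i * (Z *ᵥ (X *ᵥ w t)) i)) t := by
      refine HasDerivAt.fun_sum fun i _ => ?_
      have hinner : HasDerivAt (fun s => ∑ j, Z i j * w s j) ((Z *ᵥ (X *ᵥ w t)) i) t := by
        have := HasDerivAt.fun_sum (fun j (_ : j ∈ Finset.univ) => (hwd t j).const_mul (Z i j))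
        simpa [Matrix.mulVec, dotProduct] using this
      have houter := (hwd t i).fun_mul hinner
      convert houter using 1 <;> rfl
    rw [hgdef]
    convert hsum using 1
    have e1 : ∑ i, ((X *ᵥ w t) i * (Z *ᵥ w t) i + w t i * (Z *ᵥ (X *ᵥ w t)) i)
        = (X *ᵥ w t) ⬝ᵥ (Z *ᵥ w t) + w t ⬝ᵥ (Z *ᵥ (X *ᵥ w t)) := by
      rw [Finset.sum_add_distrib]; rfl
    have e2 : (X *ᵥ w t) ⬝ᵥ (Z *ᵥ w t) = w t ⬝ᵥ ((Xᵀ * Z) *ᵥ w t) := by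
      rw [← Matrix.mulVec_mulVec, Matrix.dotProduct_mulVec (w t) Xᵀ,
        Matrix.vecMul_transpose]
    have e3 : w t ⬝ᵥ (Z *ᵥ (X *ᵥ w t)) = w t ⬝ᵥ ((Z * X) *ᵥ w t) := by
      rw [← Matrix.mulVec_mulVec]
    rw [e1, e2, e3, ← dotProduct_add, ← Matrix.add_mulVec, hQZ,
      Matrix.neg_mulVec, dotProduct_neg]
  have hanti : Antitone g :=
    antitone_of_deriv_nonpos (fun t => (hgd t).differentiableAt)
      (fun t => by rw [(hgd t).deriv]; exact neg_nonpos.2 (hQ (w t)))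
  have hcont : Continuous fun u : Fin n → ℝ => u ⬝ᵥ (Z *ᵥ u) := by
    simp only [dotProduct, Matrix.mulVec]
    fun_prop
  have hg0 : Tendsto g atTop (nhds 0) := by
    have := (hcont.tendsto 0).comp (lyap_real_decay X hX v)
    simp only [Matrix.mulVec_zero, dotProduct_zero] at this
    exact this
  have hge : (0 : ℝ) ≤ g 0 := by
    refine le_of_tendsto hg0 ?_
    filter_upwards [eventually_ge_atTop (0 : ℝ)] with t ht
    exact hanti ht
  have hgval : g 0 = v ⬝ᵥ (Z *ᵥ v) := by
    simp [hg, hw, zero_smul, exp_zero, Matrix.one_mulVec]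
  rwa [hgval] at hge

end LyapAux

attribute [local instance] Matrix.normedAddCommGroup Matrix.normedSpace

/-- the inverse Lyapunov operator of a Hurwitz matrix reverses the
Loewner order on symmetric matrices. -/
theorem lyapunov_operator_monotone
    (n : ℕ) (hn : 0 < n) (X Y₁ Y₂ : Matrix (Fin n) (Fin n) ℝ)
    (hX : IsHurwitz X) (hY₁ : Y₁.IsSymm) (hY₂ : Y₂.IsSymm)
    (h : ((Xᵀ * Y₂ + Y₂ * X) - (Xᵀ * Y₁ + Y₁ * X)).PosSemidef) :
    (Y₁ - Y₂).PosSemidef :=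
  lyap_key X Y₁ Y₂ hX hY₁ hY₂ h
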